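/- Let ξ : ℤ → {0,1} be a bi-infinite word such that for some finite word u and all k ∈ ℤ there exist j ≥ i ≥ k with ξ(i)⋯ξ(j) = u, and such that every factor of ξ has this property, and symmetrically every factor occurs arbitrarily far to the left. Suppose further that ξ has two occurrences of some word u of length n at positions i < j (ξ[i,i+n-1] = ξ[j,j+n-1] = u) and u is right-determining in F(ξ). Then ξ(m) = ξ(m + (j - i)) for all m ∈ ℤ. -/
import Mathlib


/-- `u` occurs in the bi-infinite word `ξ` starting at position `i`. -/
def FactorAt (ξ : ℤ → Bool) (u : List Bool) (i : ℤ) : Prop :=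
  ∀ k : ℕ, k < u.length → u.getD k false = ξ (i + k)

/-- The set of finite factors of the bi-infinite word `ξ`. -/
def Factors (ξ : ℤ → Bool) : Set (List Bool) :=
  {u | ∃ i : ℤ, FactorAt ξ u i}

/-- `ξ` is recurrent: every factor occurs entirely within `(-∞,i]` and within `[i,∞)`
for every `i`. -/
def Recurrent (ξ : ℤ → Bool) : Prop :=
  ∀ u ∈ Factors ξ, ∀ i : ℤ,
    (∃ j : ℤ, j + u.length ≤ i ∧ FactorAt ξ u j) ∧
    (∃ j : ℤ, i ≤ j ∧ FactorAt ξ u j)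

/-- `ξ` is periodic. -/
def BiPeriodic (ξ : ℤ → Bool) : Prop :=
  ∃ p : ℤ, 0 < p ∧ ∀ n : ℤ, ξ n = ξ (n + p)

/-- `u` is right-determining in `F(ξ)`: for every `k` there is exactly one `v` of
length `k` with `u ++ v ∈ F(ξ)`. -/
def RightDet (ξ : ℤ → Bool) (u : List Bool) : Prop :=
  ∀ k : ℕ, ∃! v : List Bool, v.length = k ∧ u ++ v ∈ Factors ξ

/-- `u` is left-determining in `F(ξ)`. -/
def LeftDet (ξ : ℤ → Bool) (u : List Bool) : Prop :=
  ∀ k : ℕ, ∃! v : List Bool, v.length = k ∧ v ++ u ∈ Factors ξ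

/-- The segment of `ξ` of length `k` starting at `a`. -/
def seg (ξ : ℤ → Bool) (a : ℤ) (k : ℕ) : List Bool :=
  (List.range k).map fun t : ℕ => ξ (a + (t : ℤ))

lemma seg_length (ξ : ℤ → Bool) (a : ℤ) (k : ℕ) : (seg ξ a k).length = k := by
  rw [seg, List.length_map, List.length_range]

lemma seg_getD (ξ : ℤ → Bool) (a : ℤ) (k t : ℕ) (ht : t < k) :
    (seg ξ a k).getD t false = ξ (a + t) := by
  rw [List.getD_eq_getElem _ _ (by simpa [seg_length] using ht)]
  simp only [seg, List.getElem_map, List.getElem_range]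

lemma factorAt_append_seg (ξ : ℤ → Bool) (u : List Bool) (a : ℤ)
    (h : FactorAt ξ u a) (k : ℕ) :
    FactorAt ξ (u ++ seg ξ (a + u.length) k) a := by
  intro t ht
  rcases lt_or_ge t u.length with h1 | h1
  · rw [List.getD_append _ _ _ _ h1]
    exact h t h1
  · have hk : t - u.length < k := by
      simp only [List.length_append, seg_length] at ht; omega
    rw [List.getD_append_right _ _ _ _ h1, seg_getD _ _ _ _ hk]
    congr 1
    omega

/-- Two occurrences of a right-determining word have identical right tails. -/
lemma ext_occ (ξ : ℤ → Bool) (u : List Bool) (hdet : RightDet ξ u)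
    (a b : ℤ) (ha : FactorAt ξ u a) (hb : FactorAt ξ u b) :
    ∀ s : ℕ, ξ (a + s) = ξ (b + s) := by
  intro s
  rcases lt_or_ge s u.length with hs | hs
  · rw [← ha s hs, ← hb s hs]
  · set t := s - u.length with ht
    obtain ⟨v, -, huniq⟩ := hdet (t + 1)
    have hva : seg ξ (a + u.length) (t + 1) = v :=
      huniq _ ⟨seg_length _ _ _, ⟨a, factorAt_append_seg ξ u a ha (t + 1)⟩⟩
    have hvb : seg ξ (b + u.length) (t + 1) = v :=
      huniq _ ⟨seg_length _ _ _, ⟨b, factorAt_append_seg ξ u b hb (t + 1)⟩⟩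
    have := congrArg (fun l => l.getD t false) (hva.trans hvb.symm)
    simp only [seg_getD _ _ _ t (Nat.lt_succ_self t)] at this
    have hsa : a + (s : ℤ) = a + u.length + t := by omega
    have hsb : b + (s : ℤ) = b + u.length + t := by omega
    rw [hsa, hsb, this]

theorem right_determining_two_occurrences_give_period (ξ : ℤ → Bool)
    (hrec : Recurrent ξ) (u : List Bool) (n : ℕ) (hn : u.length = n)
    (i j : ℤ) (hij : i < j) (hi : FactorAt ξ u i) (hj : FactorAt ξ u j)
    (hdet : RightDet ξ u) :
    ∀ m : ℤ, ξ m = ξ (m + (j - i)) := by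
  intro m
  -- d = j - i as a natural number
  set d : ℕ := (j - i).toNat with hd
  have hdz : (d : ℤ) = j - i := Int.toNat_of_nonneg (by omega)
  -- get an occurrence of u far to the left of m
  obtain ⟨⟨p, hpm, hp⟩, -⟩ := hrec u ⟨i, hi⟩ m
  have hpi := ext_occ ξ u hdet p i hp hi
  -- u also occurs at p + d
  have hpd : FactorAt ξ u (p + d) := by
    intro t ht
    have h1 := hpi (d + t)
    have h2 := hj t ht
    have e1 : i + ((d : ℕ) + t : ℕ) = j + t := by omega
    have e2 : p + ((d : ℕ) + t : ℕ) = p + d + t := by omega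
    rw [e1] at h1
    rw [h2, ← h1, e2]
  -- tails from p and p + d agree
  have hpp := ext_occ ξ u hdet p (p + d) hp hpd
  set s : ℕ := (m - p).toNat with hs
  have hsz : (s : ℤ) = m - p := Int.toNat_of_nonneg (by omega)
  have := hpp s
  have e3 : p + (s : ℤ) = m := by omega
  have e4 : p + (d : ℤ) + s = m + (j - i) := by omega
  rw [e3, e4] at this
  exact this
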